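/- Let T_1, …, T_{L−1} be nonnegative integers and suppose κ_m = −T_m for every 1 ≤ m ≤ L−1. Then for each 1 ≤ i ≤ N the Hamiltonian operator H_i preserves the subspace F(T_1, …, T_{L−1}) of ℂ[q] spanned by the monomials q^A = Π_{m,j} (q_m^{(j)})^{A_{m,j}} over (L−1)×N matrices A of nonnegative integers satisfying Σ_{j=1}^{N} A_{m,j} ≤ T_m for every 1 ≤ m ≤ L−1. -/

import Mathlib

open MvPolynomial

namespace Stmt8Aux

variable {K N : ℕ} (T : ℕ → ℕ)

local notation "σ'" => (Fin K × Fin N)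
local notation "Poly" => MvPolynomial (Fin K × Fin N) ℂ

/-- degree vector is OK -/
def Ok (d : (Fin K × Fin N) →₀ ℕ) : Prop :=
  ∀ a : Fin K, (∑ b : Fin N, d (a, b)) ≤ T ((a : ℕ) + 1)

/-- an endomorphism preserves the span of OK monomials -/
def Good (O : Module.End ℂ (MvPolynomial (Fin K × Fin N) ℂ)) : Prop :=
  ∀ f : MvPolynomial (Fin K × Fin N) ℂ,
    (∀ d ∈ f.support, Ok T d) → ∀ d ∈ (O f).support, Ok T d

variable {T}

lemma good_zero : Good T (0 : Module.End ℂ Poly) := by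
  intro f hf d hd
  simp at hd

lemma good_one : Good T (1 : Module.End ℂ Poly) := fun f hf => hf

lemma good_add {A B : Module.End ℂ Poly} (hA : Good T A) (hB : Good T B) :
    Good T (A + B) := by
  intro f hf d hd
  rw [LinearMap.add_apply] at hd
  rcases Finset.mem_union.mp (MvPolynomial.support_add hd) with h | h
  · exact hA f hf d h
  · exact hB f hf d h

lemma good_smul {A : Module.End ℂ Poly} (c : ℂ) (hA : Good T A) : Good T (c • A) := by
  intro f hf d hd
  rw [LinearMap.smul_apply] at hd
  exact hA f hf d (MvPolynomial.support_smul hd)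

lemma good_neg {A : Module.End ℂ Poly} (hA : Good T A) : Good T (-A) := by
  intro f hf d hd
  rw [LinearMap.neg_apply] at hd
  rw [MvPolynomial.support_neg] at hd
  exact hA f hf d hd

lemma good_mul {A B : Module.End ℂ Poly} (hA : Good T A) (hB : Good T B) :
    Good T (A * B) := by
  intro f hf d hd
  rw [Module.End.mul_apply] at hd
  exact hA (B f) (hB f hf) d hd

lemma good_sum {ι : Type*} {s : Finset ι} {A : ι → Module.End ℂ Poly}
    (h : ∀ i ∈ s, Good T (A i)) : Good T (∑ i ∈ s, A i) := by
  classical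
  induction s using Finset.induction_on with
  | empty => simpa using good_zero
  | insert x s' hx ih =>
      rw [Finset.sum_insert hx]
      exact good_add (h x (Finset.mem_insert_self x s'))
        (ih fun i hi => h i (Finset.mem_insert_of_mem hi))

lemma good_of_monomial {A : Module.End ℂ Poly}
    (h : ∀ (d : (Fin K × Fin N) →₀ ℕ) (c : ℂ), Ok T d →
      ∀ d' ∈ (A (monomial d c)).support, Ok T d') : Good T A := by
  classical
  intro f hf d' hd'
  rw [f.as_sum, map_sum] at hd'
  obtain ⟨d, hd, hmem⟩ := Finset.mem_biUnion.mp (MvPolynomial.support_sum hd')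
  exact h d (coeff d f) (hf d hd) d' hmem

end Stmt8Aux

namespace Stmt8Aux

variable {K N : ℕ}

local notation "Poly" => MvPolynomial (Fin K × Fin N) ℂ

noncomputable def Qop (v : Fin K × Fin N) : Module.End ℂ Poly :=
  LinearMap.mulLeft ℂ (X v)

noncomputable def Pop (w : Fin K × Fin N) : Module.End ℂ Poly :=
  (pderiv w).toLinearMap

def rowsum (d : (Fin K × Fin N) →₀ ℕ) (a : Fin K) : ℕ := ∑ b : Fin N, d (a, b)

lemma rowsum_add (d e : (Fin K × Fin N) →₀ ℕ) (a : Fin K) :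
    rowsum (d + e) a = rowsum d a + rowsum e a := by
  simp [rowsum, Finsupp.add_apply, Finset.sum_add_distrib]

lemma rowsum_single (v : Fin K × Fin N) (a : Fin K) :
    rowsum (Finsupp.single v (1 : ℕ)) a = if v.1 = a then 1 else 0 := by
  classical
  unfold rowsum
  have h : ∀ b : Fin N, (Finsupp.single v (1:ℕ)) (a, b)
      = if v.1 = a ∧ v.2 = b then 1 else 0 := by
    intro b
    rw [Finsupp.single_apply]
    congr 1
    simp [Prod.ext_iff]
  simp only [h]
  by_cases hva : v.1 = a
  · simp only [hva, true_and]
    rw [Finset.sum_ite_eq Finset.univ v.2 (fun _ => 1)]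
    simp
  · simp [hva]

lemma rowsum_mono {d e : (Fin K × Fin N) →₀ ℕ} (h : d ≤ e) (a : Fin K) :
    rowsum d a ≤ rowsum e a :=
  Finset.sum_le_sum fun b _ => h (a, b)

lemma Qop_monomial (v : Fin K × Fin N) (d : (Fin K × Fin N) →₀ ℕ) (c : ℂ) :
    Qop v (monomial d c) = monomial (d + Finsupp.single v 1) c := by
  rw [Qop, LinearMap.mulLeft_apply, X, monomial_mul, one_mul, add_comm]

lemma Pop_monomial (w : Fin K × Fin N) (d : (Fin K × Fin N) →₀ ℕ) (c : ℂ) :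
    Pop w (monomial d c) = monomial (d - Finsupp.single w 1) (c * d w) := by
  have : Pop w (monomial d c) = pderiv w (monomial d c) := rfl
  rw [this, pderiv_monomial]

end Stmt8Aux

namespace Stmt8Aux
variable {K N : ℕ}
local notation "Poly" => MvPolynomial (Fin K × Fin N) ℂ

lemma mem_support_monomial {D d' : (Fin K × Fin N) →₀ ℕ} {C : ℂ}
    (hd' : d' ∈ (monomial D C : Poly).support) : C ≠ 0 ∧ d' = D := by
  constructor
  · intro h0; rw [h0, monomial_zero] at hd'; simp at hd'
  · have := support_monomial_subset hd'; simpa using this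

lemma rows_sub_add {d : (Fin K × Fin N) →₀ ℕ} {v w : Fin K × Fin N}
    (hw : d w ≠ 0) (h : v.1 = w.1) (a : Fin K) :
    rowsum (d - Finsupp.single w 1 + Finsupp.single v 1) a = rowsum d a := by
  have hle : Finsupp.single w 1 ≤ d := Finsupp.single_le_iff.mpr (by omega)
  have hcan : d - Finsupp.single w 1 + Finsupp.single w 1 = d := tsub_add_cancel_of_le hle
  rw [rowsum_add, rowsum_single]
  conv_rhs => rw [← hcan]
  rw [rowsum_add, rowsum_single, h]

lemma rows_add_sub {d : (Fin K × Fin N) →₀ ℕ} {v w : Fin K × Fin N}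
    (hw : ((d + Finsupp.single v 1 : (Fin K × Fin N) →₀ ℕ)) w ≠ 0) (h : v.1 = w.1) (a : Fin K) :
    rowsum (d + Finsupp.single v 1 - Finsupp.single w 1) a = rowsum d a := by
  have hle : Finsupp.single w 1 ≤ d + Finsupp.single v 1 :=
    Finsupp.single_le_iff.mpr (by omega)
  have hcan : d + Finsupp.single v 1 - Finsupp.single w 1 + Finsupp.single w 1
      = d + Finsupp.single v 1 := tsub_add_cancel_of_le hle
  have h2 : rowsum (d + Finsupp.single v 1 - Finsupp.single w 1 + Finsupp.single w 1) a
      = rowsum (d + Finsupp.single v 1) a := by rw [hcan]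
  rw [rowsum_add, rowsum_single] at h2
  rw [rowsum_add, rowsum_single, h] at h2
  omega

lemma QP_diag (w : Fin K × Fin N) (d : (Fin K × Fin N) →₀ ℕ) (c : ℂ) :
    (Qop w * Pop w) (monomial d c) = (d w : ℂ) • (monomial d c : Poly) := by
  rw [Module.End.mul_apply, Pop_monomial, Qop_monomial]
  by_cases hw : d w = 0
  · simp [hw]
  · have hle : Finsupp.single w 1 ≤ d := Finsupp.single_le_iff.mpr (by omega)
    rw [tsub_add_cancel_of_le hle, smul_monomial]
    simp [smul_eq_mul, mul_comm]

lemma Qop_comm (a b : Fin K × Fin N) : (Qop a * Qop b : Module.End ℂ Poly)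
    = Qop b * Qop a := by
  apply LinearMap.ext; intro f
  simp [Qop, Module.End.mul_apply, LinearMap.mulLeft_apply, mul_left_comm]

lemma QP_comm {a w : Fin K × Fin N} (h : a ≠ w) :
    (Qop a * Pop w : Module.End ℂ Poly) = Pop w * Qop a := by
  apply LinearMap.ext; intro f
  have : Pop w (Qop a f) = pderiv w (X a * f) := rfl
  simp only [Module.End.mul_apply, this, pderiv_mul, pderiv_X_of_ne h, zero_mul, zero_add]
  rfl

lemma QE_comm {x w : Fin K × Fin N} (h : x ≠ w) :
    (Qop x * (Qop w * Pop w) : Module.End ℂ Poly) = (Qop w * Pop w) * Qop x := by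
  rw [← mul_assoc, Qop_comm x w, mul_assoc, QP_comm h, ← mul_assoc]

end Stmt8Aux

namespace Stmt8Aux
variable {K N : ℕ} {T : ℕ → ℕ}
local notation "Poly" => MvPolynomial (Fin K × Fin N) ℂ

lemma good_of_diag {O : Module.End ℂ Poly}
    (h : ∀ (d : (Fin K × Fin N) →₀ ℕ) (c : ℂ), ∃ γ : ℂ,
      O (monomial d c) = γ • monomial d c) : Good T O := by
  apply good_of_monomial
  intro d c hd d' hd'
  obtain ⟨γ, hγ⟩ := h d c
  rw [hγ] at hd'
  obtain ⟨-, rfl⟩ := mem_support_monomial (MvPolynomial.support_smul hd')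
  exact hd

lemma good_Pop (w : Fin K × Fin N) : Good T (Pop w) := by
  apply good_of_monomial
  intro d c hd d' hd'
  rw [Pop_monomial] at hd'
  obtain ⟨-, rfl⟩ := mem_support_monomial hd'
  intro a
  exact le_trans (rowsum_mono tsub_le_self a) (hd a)

lemma good_QP {v w : Fin K × Fin N} (h : v.1 = w.1) : Good T (Qop v * Pop w) := by
  apply good_of_monomial
  intro d c hd d' hd'
  rw [Module.End.mul_apply, Pop_monomial, Qop_monomial] at hd'
  obtain ⟨hC, rfl⟩ := mem_support_monomial hd'
  have hw : d w ≠ 0 := by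
    intro h0; rw [h0] at hC; simp at hC
  intro a
  show rowsum _ a ≤ _
  rw [rows_sub_add hw h a]
  exact hd a

lemma good_PQ {v w : Fin K × Fin N} (h : v.1 = w.1) : Good T (Pop w * Qop v) := by
  apply good_of_monomial
  intro d c hd d' hd'
  rw [Module.End.mul_apply, Qop_monomial, Pop_monomial] at hd'
  obtain ⟨hC, rfl⟩ := mem_support_monomial hd'
  have hw : ((d + Finsupp.single v 1 : (Fin K × Fin N) →₀ ℕ)) w ≠ 0 := by
    intro h0; rw [h0] at hC; simp at hC
  intro a
  show rowsum _ a ≤ _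
  rw [rows_add_sub hw h a]
  exact hd a

lemma sum_Icc_pred {M : Type*} [AddCommMonoid M] (g : ℕ → M) (n : ℕ) :
    ∑ i ∈ Finset.Icc 1 n, g (i - 1) = ∑ i ∈ Finset.range n, g i := by
  rw [← Finset.Ico_add_one_right_eq_Icc, Finset.sum_Ico_eq_sum_range]
  simp

end Stmt8Aux

namespace Stmt8Aux
variable {K N : ℕ}
local notation "Poly" => MvPolynomial (Fin K × Fin N) ℂ

lemma endNegOne_mul (A : Module.End ℂ Poly) : (-1 : Module.End ℂ Poly) * A = -A :=
  neg_one_mul A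

lemma mul_endNegOne (A : Module.End ℂ Poly) : A * (-1 : Module.End ℂ Poly) = -A :=
  mul_neg_one A

lemma end_mul_neg (A B : Module.End ℂ Poly) : A * -B = -(A * B) := mul_neg A B

lemma end_neg_mul (A B : Module.End ℂ Poly) : -A * B = -(A * B) := neg_mul A B

end Stmt8Aux

open Stmt8Aux MvPolynomial in


theorem stmt8 (L N : ℕ) (hL : 2 ≤ L) (hN : 1 ≤ N)
    (e κ θ : ℕ → ℂ)
    (he_sum : ∑ m ∈ Finset.range L, e m = ((L : ℂ) - 1) / 2)
    (hκ_sum : ∑ m ∈ Finset.range L, κ m = ∑ i ∈ Finset.range (N + 1), θ i)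
    (z : ℕ → ℂ)
    (hz_distinct : ∀ i j, 1 ≤ i → i ≤ N → 1 ≤ j → j ≤ N → i ≠ j → z i ≠ z j)
    (hz0 : ∀ i, 1 ≤ i → i ≤ N → z i ≠ 0)
    (hz1 : ∀ i, 1 ≤ i → i ≤ N → z i ≠ 1)
    (Q P : ℕ → ℕ → Module.End ℂ (MvPolynomial (Fin (L - 1) × Fin N) ℂ))
    (hQ : ∀ m i, ∀ hm : 1 ≤ m ∧ m ≤ L - 1, ∀ hi : 1 ≤ i ∧ i ≤ N,
      Q m i = LinearMap.mulLeft ℂ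
        (MvPolynomial.X (⟨m - 1, by omega⟩, ⟨i - 1, by omega⟩)))
    (hP : ∀ m i, ∀ hm : 1 ≤ m ∧ m ≤ L - 1, ∀ hi : 1 ≤ i ∧ i ≤ N,
      P m i = (MvPolynomial.pderiv (⟨m - 1, by omega⟩, ⟨i - 1, by omega⟩)).toLinearMap)
    (hQ0 : ∀ i, 1 ≤ i → i ≤ N →
      Q 0 i = θ i • (1 : Module.End ℂ (MvPolynomial (Fin (L - 1) × Fin N) ℂ))
        + ∑ m ∈ Finset.Icc 1 (L - 1), Q m i * P m i)
    (hP0 : ∀ i, 1 ≤ i → i ≤ N → P 0 i = -1)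
    (hQm0 : ∀ m, 1 ≤ m → m ≤ L - 1 → Q m 0 = -1)
    (hPm0 : ∀ m, 1 ≤ m → m ≤ L - 1 →
      P m 0 = κ m • (1 : Module.End ℂ (MvPolynomial (Fin (L - 1) × Fin N) ℂ))
        + ∑ i ∈ Finset.Icc 1 N, Q m i * P m i)
    (hQ00 : Q 0 0 = (κ 0 - ∑ i ∈ Finset.Icc 1 N, θ i) •
        (1 : Module.End ℂ (MvPolynomial (Fin (L - 1) × Fin N) ℂ))
      - ∑ i ∈ Finset.Icc 1 N, ∑ m ∈ Finset.Icc 1 (L - 1), Q m i * P m i)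
    (hP00 : P 0 0 = -1)
    (H : ℕ → Module.End ℂ (MvPolynomial (Fin (L - 1) × Fin N) ℂ))
    (hH : ∀ i, 1 ≤ i → i ≤ N → z i • H i =
      (∑ n ∈ Finset.range L, e n • (Q n i * P n i))
      + (∑ j ∈ Finset.range (N + 1), ∑ n ∈ Finset.range L, ∑ m ∈ Finset.range n,
          Q m i * P m j * Q n j * P n i)
      + (z i - 1)⁻¹ • (∑ m ∈ Finset.range L, ∑ n ∈ Finset.range L,
          Q m i * P m 0 * Q n 0 * P n i)
      + (∑ j ∈ (Finset.Icc 1 N).erase i, (z j / (z i - z j)) •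
          (∑ m ∈ Finset.range L, ∑ n ∈ Finset.range L, Q m i * P n i * Q n j * P m j))
      + (θ i * (e 0 + κ 0 - (∑ j ∈ Finset.Icc 1 N, θ j)
          - ∑ j ∈ (Finset.Icc 1 N).erase i, θ j * z j / (z i - z j))) •
          (1 : Module.End ℂ (MvPolynomial (Fin (L - 1) × Fin N) ℂ)))
    (T : ℕ → ℕ)
    (hκT : ∀ m, 1 ≤ m → m ≤ L - 1 → κ m = -(T m : ℂ)) :
    ∀ i, 1 ≤ i → i ≤ N → ∀ f : MvPolynomial (Fin (L - 1) × Fin N) ℂ,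
      (∀ d ∈ f.support, ∀ a : Fin (L - 1), (∑ b : Fin N, d (a, b)) ≤ T ((a : ℕ) + 1)) →
      (∀ d ∈ (H i f).support, ∀ a : Fin (L - 1),
        (∑ b : Fin N, d (a, b)) ≤ T ((a : ℕ) + 1)) := by
  classical
  intro i hi1 hiN f hf
  -- rewrite Q, P into Qop, Pop form
  have hQeq : ∀ m i' (_h1 : 1 ≤ m) (_h2 : m ≤ L - 1) (_h3 : 1 ≤ i') (_h4 : i' ≤ N),
      Q m i' = Qop ((⟨m - 1, by omega⟩ : Fin (L - 1)), (⟨i' - 1, by omega⟩ : Fin N)) := by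
    intro m i' h1 h2 h3 h4
    rw [hQ m i' ⟨h1, h2⟩ ⟨h3, h4⟩]; rfl
  have hPeq : ∀ m i' (_h1 : 1 ≤ m) (_h2 : m ≤ L - 1) (_h3 : 1 ≤ i') (_h4 : i' ≤ N),
      P m i' = Pop ((⟨m - 1, by omega⟩ : Fin (L - 1)), (⟨i' - 1, by omega⟩ : Fin N)) := by
    intro m i' h1 h2 h3 h4
    rw [hP m i' ⟨h1, h2⟩ ⟨h3, h4⟩]; rfl
  have hEm : ∀ m i' (_h1 : 1 ≤ m) (_h2 : m ≤ L - 1) (_h3 : 1 ≤ i') (_h4 : i' ≤ N),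
      Q m i' * P m i' = Qop ((⟨m - 1, by omega⟩ : Fin (L - 1)), (⟨i' - 1, by omega⟩ : Fin N)) *
        Pop ((⟨m - 1, by omega⟩ : Fin (L - 1)), (⟨i' - 1, by omega⟩ : Fin N)) := by
    intro m i' h1 h2 h3 h4
    rw [hQeq m i' h1 h2 h3 h4, hPeq m i' h1 h2 h3 h4]
  -- diagonal action of P m 0 on monomials
  have hrowPm0 : ∀ m (h1 : 1 ≤ m) (h2 : m ≤ L - 1) (hmlt : m - 1 < L - 1)
      (d : (Fin (L - 1) × Fin N) →₀ ℕ) (c : ℂ),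
      P m 0 (MvPolynomial.monomial d c)
        = (κ m + ((rowsum d ⟨m - 1, hmlt⟩ : ℕ) : ℂ)) • MvPolynomial.monomial d c := by
    intro m h1 h2 hmlt d c
    set a0 : Fin (L - 1) := ⟨m - 1, hmlt⟩ with ha0
    set D : ℕ → ℂ := fun k => if h : k < N then ((d (a0, ⟨k, h⟩) : ℕ) : ℂ) else 0 with hD
    have hterm : ∀ i' ∈ Finset.Icc 1 N, (Q m i' * P m i') (MvPolynomial.monomial d c)
        = D (i' - 1) • MvPolynomial.monomial d c := by
      intro i' hi'
      obtain ⟨h3, h4⟩ := Finset.mem_Icc.mp hi'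
      rw [hEm m i' h1 h2 h3 h4, QP_diag]
      simp only [hD]
      rw [dif_pos (show i' - 1 < N by omega)]
    have hsum : (∑ i' ∈ Finset.Icc 1 N, Q m i' * P m i') (MvPolynomial.monomial d c)
        = (∑ i' ∈ Finset.Icc 1 N, D (i' - 1)) • MvPolynomial.monomial d c := by
      calc (∑ i' ∈ Finset.Icc 1 N, Q m i' * P m i') (MvPolynomial.monomial d c)
          = ∑ i' ∈ Finset.Icc 1 N, (Q m i' * P m i') (MvPolynomial.monomial d c) :=
            LinearMap.sum_apply _ _ _
        _ = ∑ i' ∈ Finset.Icc 1 N, D (i' - 1) • MvPolynomial.monomial d c :=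
            Finset.sum_congr rfl hterm
        _ = (∑ i' ∈ Finset.Icc 1 N, D (i' - 1)) • MvPolynomial.monomial d c :=
            (Finset.sum_smul).symm
    have hDval : ∑ i' ∈ Finset.Icc 1 N, D (i' - 1) = ((rowsum d a0 : ℕ) : ℂ) := by
      rw [sum_Icc_pred, ← Fin.sum_univ_eq_sum_range]
      have hcast : ((rowsum d a0 : ℕ) : ℂ) = ∑ b : Fin N, ((d (a0, b) : ℕ) : ℂ) := by
        rw [rowsum]; push_cast; rfl
      rw [hcast]
      apply Finset.sum_congr rfl
      intro b _
      simp only [hD]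
      rw [dif_pos b.isLt]
    rw [hPm0 m h1 h2, LinearMap.add_apply, LinearMap.smul_apply, Module.End.one_apply,
      hsum, hDval, ← add_smul]
  -- goodness of the diagonal-ish operators
  have hQ0iGood : ∀ j, 1 ≤ j → j ≤ N → Good T (Q 0 j) := by
    intro j h3 h4
    rw [hQ0 j h3 h4]
    apply good_add
    · exact good_smul _ good_one
    · apply good_sum
      intro m' hm'
      obtain ⟨h1, h2⟩ := Finset.mem_Icc.mp hm'
      rw [hEm m' j h1 h2 h3 h4]
      exact good_QP rfl
  have hQ00Good : Good T (Q 0 0) := by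
    rw [hQ00, sub_eq_add_neg]
    apply good_add
    · exact good_smul _ good_one
    · apply good_neg; apply good_sum; intro j hj; apply good_sum; intro m' hm'
      obtain ⟨h3, h4⟩ := Finset.mem_Icc.mp hj
      obtain ⟨h1, h2⟩ := Finset.mem_Icc.mp hm'
      rw [hEm m' j h1 h2 h3 h4]; exact good_QP rfl
  have hPm0Good : ∀ m, 1 ≤ m → m ≤ L - 1 → Good T (P m 0) := by
    intro m h1 h2
    exact good_of_diag (fun d c => ⟨_, hrowPm0 m h1 h2 (by omega) d c⟩)
  -- the delicate operator
  have hdel : ∀ m, 1 ≤ m → m ≤ L - 1 → ∀ i', 1 ≤ i' → i' ≤ N →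
      Good T (Q m i' * P m 0) := by
    intro m h1 h2 i' h3 h4
    apply good_of_monomial
    intro d c hd d' hd'
    have hmlt : m - 1 < L - 1 := by omega
    set a0 : Fin (L - 1) := ⟨m - 1, hmlt⟩ with ha0
    rw [Module.End.mul_apply, hrowPm0 m h1 h2 hmlt d c, map_smul,
      hQeq m i' h1 h2 h3 h4, Qop_monomial] at hd'
    have hle : rowsum d a0 ≤ T m := by
      have h' : rowsum d a0 ≤ T ((a0 : ℕ) + 1) := hd a0
      have hcast : ((a0 : ℕ) + 1) = m := by simp only [ha0]; omega
      rwa [hcast] at h'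
    by_cases hrt : rowsum d a0 = T m
    · exfalso
      rw [hκT m h1 h2, hrt] at hd'
      simp at hd'
    · obtain ⟨-, rfl⟩ := mem_support_monomial (MvPolynomial.support_smul hd')
      intro a
      show rowsum _ a ≤ _
      rw [rowsum_add, rowsum_single]
      by_cases ha : (a : ℕ) = m - 1
      · have haa : a = a0 := Fin.ext (by rw [ha])
        rw [haa]
        rw [if_pos (show _ = a0 from rfl)]
        have hv : ((a0 : ℕ)) = m - 1 := rfl
        rw [hv]
        have hm1 : m - 1 + 1 = m := by omega
        rw [hm1]
        have : rowsum d a0 < T m := lt_of_le_of_ne hle hrt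
        omega
      · rw [if_neg (fun h => ha (by rw [← h])), add_zero]
        exact hd a
  -- general pair lemmas
  have pairQP : ∀ m, m < L → ∀ a b, a ≤ N → b ≤ N → Good T (Q m a * P m b) := by
    intro m hm a b ha hb
    rcases Nat.eq_zero_or_pos m with rfl | hm1
    · have hub : P 0 b = -1 := by
        rcases Nat.eq_zero_or_pos b with rfl | hb1
        · exact hP00
        · exact hP0 b hb1 hb
      refine good_mul ?_ (by rw [hub]; exact good_neg good_one)
      rcases Nat.eq_zero_or_pos a with rfl | ha1
      · exact hQ00Good
      · exact hQ0iGood a ha1 ha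
    · have hm2 : m ≤ L - 1 := by omega
      rcases Nat.eq_zero_or_pos a with rfl | ha1
      · refine good_mul (by rw [hQm0 m hm1 hm2]; exact good_neg good_one) ?_
        rcases Nat.eq_zero_or_pos b with rfl | hb1
        · exact hPm0Good m hm1 hm2
        · rw [hPeq m b hm1 hm2 hb1 hb]; exact good_Pop _
      · rcases Nat.eq_zero_or_pos b with rfl | hb1
        · exact hdel m hm1 hm2 a ha1 ha
        · rw [hQeq m a hm1 hm2 ha1 ha, hPeq m b hm1 hm2 hb1 hb]
          exact good_QP rfl
  have pairPQ : ∀ n, n < L → ∀ a b, 1 ≤ a → a ≤ N → 1 ≤ b → b ≤ N →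
      Good T (P n a * Q n b) := by
    intro n hn a b ha1 ha hb1 hb
    rcases Nat.eq_zero_or_pos n with rfl | hn1
    · exact good_mul (by rw [hP0 a ha1 ha]; exact good_neg good_one) (hQ0iGood b hb1 hb)
    · have hn2 : n ≤ L - 1 := by omega
      rw [hPeq n a hn1 hn2 ha1 ha, hQeq n b hn1 hn2 hb1 hb]
      exact good_PQ rfl
  -- commutation lemmas
  have hcommE : ∀ m, 1 ≤ m → m ≤ L - 1 → ∀ j, 1 ≤ j → j ≤ N → j ≠ i →
      Q m i * Q 0 j = Q 0 j * Q m i := by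
    intro m h1 h2 j h3 h4 hji
    rw [hQ0 j h3 h4, mul_add, add_mul]
    congr 1
    · rw [mul_smul_comm, smul_mul_assoc, mul_one, one_mul]
    · rw [Finset.mul_sum, Finset.sum_mul]
      apply Finset.sum_congr rfl
      intro m' hm'
      obtain ⟨h1', h2'⟩ := Finset.mem_Icc.mp hm'
      rw [hEm m' j h1' h2' h3 h4, hQeq m i h1 h2 hi1 hiN]
      apply QE_comm
      intro hEq
      have := congrArg Prod.snd hEq
      simp only [Fin.mk.injEq] at this
      omega
  have hcomm : ∀ m, 1 ≤ m → m ≤ L - 1 → ∀ n, n < L → ∀ j, 1 ≤ j → j ≤ N → j ≠ i → m ≠ n →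
      Q m i * (P n i * Q n j) = (P n i * Q n j) * Q m i := by
    intro m h1 h2 n hn j h3 h4 hji hmn
    rcases Nat.eq_zero_or_pos n with rfl | hn1
    · rw [hP0 i hi1 hiN, endNegOne_mul, end_mul_neg, end_neg_mul]
      rw [hcommE m h1 h2 j h3 h4 hji]
    · have hn2 : n ≤ L - 1 := by omega
      rw [hPeq n i hn1 hn2 hi1 hiN, hQeq n j hn1 hn2 h3 h4, hQeq m i h1 h2 hi1 hiN]
      have hxu : (((⟨m - 1, by omega⟩ : Fin (L - 1)), (⟨i - 1, by omega⟩ : Fin N)) :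
            Fin (L - 1) × Fin N)
          ≠ ((⟨n - 1, by omega⟩ : Fin (L - 1)), (⟨i - 1, by omega⟩ : Fin N)) := by
        intro hEq
        have := congrArg Prod.fst hEq
        simp only [Fin.mk.injEq] at this
        omega
      rw [← mul_assoc, QP_comm hxu, mul_assoc, Qop_comm, ← mul_assoc]
  -- main computation
  have hGood : Good T (z i • H i) := by
    rw [hH i hi1 hiN]
    refine good_add (good_add (good_add (good_add ?_ ?_) ?_) ?_) ?_
    · -- term 1
      apply good_sum
      intro n hn
      exact good_smul _ (pairQP n (Finset.mem_range.mp hn) i i hiN hiN)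
    · -- term 2
      apply good_sum; intro j hj
      apply good_sum; intro n hn
      apply good_sum; intro m hm
      have hjN : j ≤ N := by have := Finset.mem_range.mp hj; omega
      have hnL := Finset.mem_range.mp hn
      have hmn := Finset.mem_range.mp hm
      rw [mul_assoc (Q m i * P m j)]
      exact good_mul (pairQP m (by omega) i j hiN hjN) (pairQP n hnL j i hjN hiN)
    · -- term 3
      apply good_smul
      apply good_sum; intro m hm
      apply good_sum; intro n hn
      rw [mul_assoc (Q m i * P m 0)]
      exact good_mul (pairQP m (Finset.mem_range.mp hm) i 0 hiN (Nat.zero_le N))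
        (pairQP n (Finset.mem_range.mp hn) 0 i (Nat.zero_le N) hiN)
    · -- term 4
      apply good_sum; intro j hj
      obtain ⟨hji, hjmem⟩ := Finset.mem_erase.mp hj
      obtain ⟨hj1, hjN⟩ := Finset.mem_Icc.mp hjmem
      apply good_smul
      apply good_sum; intro m hm
      apply good_sum; intro n hn
      have hmL := Finset.mem_range.mp hm
      have hnL := Finset.mem_range.mp hn
      rcases Nat.eq_zero_or_pos m with rfl | hm1
      · refine good_mul ?_ (by rw [hP0 j hj1 hjN]; exact good_neg good_one)
        rw [mul_assoc]
        exact good_mul (hQ0iGood i hi1 hiN) (pairPQ n hnL i j hi1 hiN hj1 hjN)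
      · have hm2 : m ≤ L - 1 := by omega
        rcases eq_or_ne m n with rfl | hmn
        · rw [mul_assoc (Q m i * P m i)]
          exact good_mul (pairQP m hmL i i hiN hiN) (pairQP m hmL j j hjN hjN)
        · rw [mul_assoc (Q m i) (P n i) (Q n j)]
          rw [hcomm m hm1 hm2 n hnL j hj1 hjN hji hmn]
          rw [mul_assoc]
          exact good_mul (pairPQ n hnL i j hi1 hiN hj1 hjN) (pairQP m hmL i j hiN hjN)
    · -- term 5
      exact good_smul _ good_one
  have hzi := hz0 i hi1 hiN
  have hHiGood : Good T (H i) := by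
    intro f' hf' d hd
    have heq : H i f' = (z i)⁻¹ • ((z i • H i) f') := by
      rw [LinearMap.smul_apply, smul_smul, inv_mul_cancel₀ hzi, one_smul]
    rw [heq] at hd
    exact hGood f' hf' d (MvPolynomial.support_smul hd)
  exact hHiGood f hf
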